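/- Let a, b > 0 be real numbers and let f, g : ℝ → (0, ∞) be functions such that f is monotonically increasing and x ↦ g(x)/f(x) is monotonically increasing. Then for any real x₁ < x₂ one has (b + g(x₁))/(a + f(x₁)) ≤ max{ b/a , (b + g(x₂))/(a + f(x₂)) }. Moreover, if the limit L = lim_{x→∞} (b + g(x))/(a + f(x)) exists, then for every x₀ ∈ ℝ one has (b + g(x₀))/(a + f(x₀)) ≤ max{ b/a , L }. -/
import Mathlib


open Filter

theorem stmt0 (a b : ℝ) (ha : 0 < a) (hb : 0 < b)
    (f g : ℝ → ℝ) (hfpos : ∀ x, 0 < f x) (hgpos : ∀ x, 0 < g x)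
    (hf : Monotone f) (hgf : Monotone fun x => g x / f x) :
    (∀ x₁ x₂ : ℝ, x₁ < x₂ →
        (b + g x₁) / (a + f x₁) ≤ max (b / a) ((b + g x₂) / (a + f x₂))) ∧
    (∀ L : ℝ, Tendsto (fun x => (b + g x) / (a + f x)) atTop (nhds L) →
        ∀ x₀ : ℝ, (b + g x₀) / (a + f x₀) ≤ max (b / a) L) := by
  have key : ∀ x₁ x₂ : ℝ, x₁ < x₂ →
      (b + g x₁) / (a + f x₁) ≤ max (b / a) ((b + g x₂) / (a + f x₂)) := by
    intro x₁ x₂ hx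
    have hf1 := hfpos x₁
    have hf2 := hfpos x₂
    have hg1 := hgpos x₁
    have hg2 := hgpos x₂
    have haf1 : 0 < a + f x₁ := by linarith
    have haf2 : 0 < a + f x₂ := by linarith
    have hff : f x₁ ≤ f x₂ := hf hx.le
    have hquot : g x₁ / f x₁ ≤ g x₂ / f x₂ := hgf hx.le
    have hcross : g x₁ * f x₂ ≤ g x₂ * f x₁ := by
      rw [div_le_div_iff₀ hf1 hf2] at hquot
      linarith
    rcases le_or_gt (a * g x₁) (b * f x₁) with h | h
    · refine le_max_of_le_left ?_
      rw [div_le_div_iff₀ haf1 ha]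
      nlinarith
    · refine le_max_of_le_right ?_
      rw [div_le_div_iff₀ haf1 haf2]
      nlinarith [mul_nonneg (sub_nonneg.2 h.le) (sub_nonneg.2 hff),
        mul_nonneg ha.le (sub_nonneg.2 hcross), mul_pos ha hf1,
        mul_nonneg hf1.le (sub_nonneg.2 hcross)]
  refine ⟨key, ?_⟩
  intro L hL x₀
  have hmax : Tendsto (fun x => max (b / a) ((b + g x) / (a + f x))) atTop
      (nhds (max (b / a) L)) := tendsto_const_nhds.max hL
  refine ge_of_tendsto hmax ?_
  filter_upwards [eventually_gt_atTop x₀] with x hx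
  exact key x₀ x hx
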